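/- Let V be a finite set and let B ⊆ 2^V be a nonempty Sperner hypergraph. Then the family of inclusion-minimal keys of the pure Horn function Φ_B equals B, i.e. K(Φ_B) = B. -/
import Mathlib


open scoped Classical

variable {V : Type*} [Fintype V] [DecidableEq V]

/-- A Sperner hypergraph: no hyperedge contains another one. -/
def SpernerFam (𝓑 : Set (Finset V)) : Prop :=
  ∀ B₁ ∈ 𝓑, ∀ B₂ ∈ 𝓑, B₁ ⊆ B₂ → B₁ = B₂

/-- `T` is a transversal of `𝓑` if it meets every hyperedge. -/
def IsTransversal (𝓑 : Set (Finset V)) (T : Finset V) : Prop :=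
  ∀ B ∈ 𝓑, (T ∩ B).Nonempty

/-- `𝓑^d`: the family of inclusion-minimal transversals of `𝓑`. -/
def dualHyp (𝓑 : Set (Finset V)) : Set (Finset V) :=
  {T | IsTransversal 𝓑 T ∧ ∀ T', IsTransversal 𝓑 T' → T' ⊆ T → T' = T}

/-- A Boolean function `h` on `V` is pure Horn if its set of true assignments contains the
all-true assignment and is closed under componentwise AND. -/
def PureHorn (h : (V → Bool) → Bool) : Prop :=
  h (fun _ => true) = true ∧
  ∀ x y : V → Bool, h x = true → h y = true → h (fun v => x v && y v) = true

/-- The clause `A → v` is an implicate of `h`: every true assignment of `h` that is true on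
every element of `A` is also true at `v`. -/
def Implicate (h : (V → Bool) → Bool) (A : Finset V) (v : V) : Prop :=
  ∀ x : V → Bool, h x = true → (∀ a ∈ A, x a = true) → x v = true

/-- `K` is a key of `h` if `K → v` is an implicate of `h` for every `v ∈ V \ K`. -/
def IsKey (h : (V → Bool) → Bool) (K : Finset V) : Prop :=
  ∀ v ∉ K, Implicate h K v

/-- `𝒦(h)`: the family of inclusion-minimal keys of `h`. -/
def minKeys (h : (V → Bool) → Bool) : Set (Finset V) :=
  {K | IsKey h K ∧ ∀ K', IsKey h K' → K' ⊆ K → K' = K}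

/-- `Φ_𝓑`: the pure Horn function whose true assignments are exactly those `x` such that for
every `B ∈ 𝓑` on which `x` is identically true, `x` is identically true on all of `V`. -/
noncomputable def PhiB (𝓑 : Set (Finset V)) : (V → Bool) → Bool :=
  fun x => decide (∀ B ∈ 𝓑, (∀ u ∈ B, x u = true) → ∀ v : V, x v = true)

/-- For a nonempty Sperner hypergraph `𝓑 ⊆ 2^V`, the family of inclusion-minimal keys of
the pure Horn function `Φ_𝓑` equals `𝓑`. -/
lemma key_iff_aux (𝓑 : Set (Finset V)) (hne : 𝓑.Nonempty) (K : Finset V) :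
    IsKey (PhiB 𝓑) K ↔ ∃ B ∈ 𝓑, B ⊆ K := by
  constructor
  · intro hK
    by_contra h
    push_neg at h
    have hx : PhiB 𝓑 (fun v => decide (v ∈ K)) = true := by
      simp only [PhiB, decide_eq_true_eq]
      intro B hB hBK
      exact absurd (h B hB) (by simp [Finset.subset_iff] at hBK ⊢; exact hBK)
    obtain ⟨B0, hB0⟩ := hne
    have hv : ∃ v, v ∉ K := by
      by_contra hall
      push_neg at hall
      exact absurd (fun u _ => hall u) (h B0 hB0)
    obtain ⟨v, hv⟩ := hv
    have := hK v hv (fun v => decide (v ∈ K)) hx (fun a ha => by simpa using ha)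
    simp only [decide_eq_true_eq] at this
    exact hv this
  · rintro ⟨B, hB, hBK⟩ v hv x hx hxK
    simp only [PhiB, decide_eq_true_eq] at hx
    exact hx B hB (fun u hu => hxK u (hBK hu)) v

theorem stmt1 (𝓑 : Set (Finset V)) (hne : 𝓑.Nonempty) (hSp : SpernerFam 𝓑) :
    minKeys (PhiB 𝓑) = 𝓑 := by
  ext K
  constructor
  · rintro ⟨hkey, hmin⟩
    obtain ⟨B, hB, hBK⟩ := (key_iff_aux 𝓑 hne K).mp hkey
    have hBkey : IsKey (PhiB 𝓑) B := (key_iff_aux 𝓑 hne B).mpr ⟨B, hB, subset_rfl⟩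
    have := hmin B hBkey hBK
    subst this
    exact hB
  · intro hK
    refine ⟨(key_iff_aux 𝓑 hne K).mpr ⟨K, hK, subset_rfl⟩, ?_⟩
    intro K' hK' hsub
    obtain ⟨B', hB', hB'K'⟩ := (key_iff_aux 𝓑 hne K').mp hK'
    have hBK : B' = K := hSp B' hB' K hK (hB'K'.trans hsub)
    exact Finset.Subset.antisymm hsub (hBK ▸ hB'K')
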